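/- Let A be a self-adjoint operator on H admitting a real point ξ in its resolvent set, let A be injective, g ∈ ran A, and f the unique solution to A f = g. Then f lies in the closed span of the vectors (A − ξ)^{-m} g, m ∈ ℕ. -/

import Mathlib

open scoped InnerProductSpace

/-- Proposition 4.6: let `A` be an injective self-adjoint operator on `H` with a real point
`ξ` in its resolvent set (witnessed by the bounded resolvent operator `R = (A − ξ)⁻¹`),
let `g ∈ ran A` and let `f` be the unique solution of `A f = g`.  Then `f` lies in the
closed span of the vectors `(A − ξ)^{-m} g`, `m ≥ 1`. -/
theorem stmt18 {H : Type*} [NormedAddCommGroup H] [InnerProductSpace ℂ H]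
    [CompleteSpace H] (A : H →ₗ.[ℂ] H) (hsa : A.adjoint = A)
    (hinj : ∀ (x : H) (hx : x ∈ A.domain), A ⟨x, hx⟩ = 0 → x = 0)
    (ξ : ℝ) (R : H →L[ℂ] H)
    (hR1 : ∀ y : H, ∃ h : R y ∈ A.domain, A ⟨R y, h⟩ - (ξ : ℂ) • R y = y)
    (hR2 : ∀ (x : H) (hx : x ∈ A.domain), R (A ⟨x, hx⟩ - (ξ : ℂ) • x) = x)
    (g f : H) (hfdom : f ∈ A.domain) (hAf : A ⟨f, hfdom⟩ = g) :
    f ∈ (Submodule.span ℂ (Set.range fun m : ℕ => (R ^ (m + 1)) g)).topologicalClosure := by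
  classical
  set S := Submodule.span ℂ (Set.range fun m : ℕ => (R ^ (m + 1)) g) with hS
  set K := S.topologicalClosure with hK
  by_cases hd : Dense (A.domain : Set H)
  · -- the main case: `A` is densely defined, hence symmetric
    have hsym : ∀ u v : A.domain, ⟪(A u : H), (v : H)⟫_ℂ = ⟪(u : H), (A v : H)⟫_ℂ := by
      have h := LinearPMap.adjoint_isFormalAdjoint hd (T := A)
      rw [hsa] at h
      exact h
    -- symmetry of `R`
    have hRsym : ∀ x y : H, ⟪R x, y⟫_ℂ = ⟪x, R y⟫_ℂ := by
      intro x y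
      obtain ⟨hu, hux⟩ := hR1 x
      obtain ⟨hv, hvy⟩ := hR1 y
      calc ⟪R x, y⟫_ℂ = ⟪R x, A ⟨R y, hv⟩ - (ξ : ℂ) • R y⟫_ℂ := by rw [hvy]
        _ = ⟪(R x : H), (A ⟨R y, hv⟩ : H)⟫_ℂ - (ξ : ℂ) * ⟪R x, R y⟫_ℂ := by
            rw [inner_sub_right, inner_smul_right]
        _ = ⟪(A ⟨R x, hu⟩ : H), (R y : H)⟫_ℂ - (ξ : ℂ) * ⟪R x, R y⟫_ℂ := by
            rw [hsym ⟨R x, hu⟩ ⟨R y, hv⟩]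
        _ = ⟪A ⟨R x, hu⟩ - (ξ : ℂ) • R x, R y⟫_ℂ := by
            rw [inner_sub_left, inner_smul_left, Complex.conj_ofReal]
        _ = ⟪x, R y⟫_ℂ := by rw [hux]
    -- `K` is invariant under `R`
    have hRS : ∀ x ∈ S, R x ∈ S := by
      intro x hx
      induction hx using Submodule.span_induction with
      | mem x hx =>
          obtain ⟨m, rfl⟩ := hx
          exact Submodule.subset_span ⟨m + 1, by show (R ^ (m + 1 + 1)) g = R ((R ^ (m + 1)) g); rw [pow_succ']; rfl⟩
      | zero => simp
      | add a b _ _ ha hb => rw [map_add]; exact add_mem ha hb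
      | smul c a _ ha => rw [map_smul]; exact Submodule.smul_mem _ _ ha
    have hRK : ∀ x ∈ K, R x ∈ K := by
      intro x hx
      have h1 : R x ∈ S.topologicalClosure.map (R : H →ₗ[ℂ] H) :=
        Submodule.mem_map_of_mem hx
      have h2 := Submodule.topologicalClosure_map R S h1
      refine Submodule.topologicalClosure_mono ?_ h2
      rw [Submodule.map_le_iff_le_comap]
      intro y hy
      exact hRS y hy
    have hKclosed : IsClosed (K : Set H) := Submodule.isClosed_topologicalClosure S
    haveI : CompleteSpace K := hKclosed.completeSpace_coe
    -- invariance of the orthogonal complement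
    have hKperp : ∀ x ∈ Kᗮ, R x ∈ Kᗮ := by
      intro x hx
      rw [Submodule.mem_orthogonal] at hx ⊢
      intro u hu
      rw [← hRsym u x]
      exact hx (R u) (hRK u hu)
    -- the key identity `R g = f + ξ • R f`
    have key : R g = f + (ξ : ℂ) • R f := by
      have h2 := hR2 f hfdom
      calc R g = R ((A ⟨f, hfdom⟩ - (ξ : ℂ) • f) + (ξ : ℂ) • f) := by
            rw [sub_add_cancel, hAf]
        _ = R (A ⟨f, hfdom⟩ - (ξ : ℂ) • f) + (ξ : ℂ) • R f := by
            rw [map_add, map_smul]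
        _ = f + (ξ : ℂ) • R f := by rw [h2]
    -- decompose `f`
    set p : H := (K.orthogonalProjectionOnto f : H) with hp
    have hpK : p ∈ K := (K.orthogonalProjectionOnto f).2
    set w : H := f - p with hwdef
    have hwperp : w ∈ Kᗮ := K.sub_starProjection_mem_orthogonal f
    -- `w + ξ • R w` lies in both `K` and `Kᗮ`, hence vanishes
    have hmemK : w + (ξ : ℂ) • R w ∈ K := by
      have : w + (ξ : ℂ) • R w = R g - p - (ξ : ℂ) • R p := by
        rw [key, hwdef, map_sub]
        module
      rw [this]
      have hRg : R g ∈ K := S.le_topologicalClosure (Submodule.subset_span ⟨0, by simp⟩)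
      exact sub_mem (sub_mem hRg hpK) (Submodule.smul_mem _ _ (hRK p hpK))
    have hmemperp : w + (ξ : ℂ) • R w ∈ Kᗮ :=
      add_mem hwperp (Submodule.smul_mem _ _ (hKperp w hwperp))
    have hzero : w + (ξ : ℂ) • R w = 0 :=
      Submodule.disjoint_def.mp (Submodule.orthogonal_disjoint K) _ hmemK hmemperp
    -- now use injectivity of `A` to conclude `w = 0`
    obtain ⟨hRw, hARw⟩ := hR1 w
    have hAzero : A ⟨R w, hRw⟩ = 0 := by
      rw [eq_add_of_sub_eq hARw, hzero]
    have hRw0 : R w = 0 := hinj (R w) hRw hAzero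
    have hw0 : w = 0 := by
      have := hzero
      rw [hRw0, smul_zero, add_zero] at this
      exact this
    have : f = p := by rw [← sub_eq_zero]; exact hw0
    rw [this]
    exact hpK
  · -- degenerate case: `A` is not densely defined, so `A = A† = 0` and `f = 0`
    have hzero : ∀ (x : H) (hx : x ∈ A.domain), A ⟨x, hx⟩ = 0 := by
      rw [← hsa]
      intro x hx
      exact LinearPMap.adjoint_apply_of_not_dense hd ⟨x, hx⟩
    have : f = 0 := hinj f hfdom (hzero f hfdom)
    rw [this]
    exact zero_mem _
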